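/- Let m = 2n+k with n ≥ 1, k ≥ 0, and let v_0,…,v_{m-1} ∈ ℝ^{k+1} with v_j = (1, t_j, t_j^2, …, t_j^k) for real numbers t_0 < t_1 < … < t_{m-1}. Then for every stable subset S of ℤ_m of cardinality n (i.e., S contains no two cyclically consecutive elements), the alternating sum ∑_{i∈S} (-1)^i v_i is nonzero. -/

import Mathlib

open Finset Polynomial

private lemma negOnePow_congr {a b : ℕ} (h : a % 2 = b % 2) :
    ((-1 : ℝ) ^ a) = (-1 : ℝ) ^ b := by
  rw [neg_one_pow_eq_pow_mod_two, h, ← neg_one_pow_eq_pow_mod_two]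

/-- For `m = 2n+k`, vectors `v_j = (1, t_j, …, t_j^k)` on the moment curve
with `t_0 < … < t_{m-1}`, and any stable `n`-subset `S` of `ℤ_m`,
the alternating sum `∑_{i ∈ S} (-1)^i v_i` is nonzero. -/
theorem stmt0 (n k m : ℕ) (hn : 1 ≤ n) (hm : m = 2 * n + k)
    (t : ℕ → ℝ) (ht : ∀ i j, i < j → j < m → t i < t j)
    (S : Finset ℕ) (hSsub : S ⊆ Finset.range m) (hScard : S.card = n)
    (hstable : ∀ i ∈ S, (i + 1) % m ∉ S) :
    (∑ i ∈ S, ((-1 : ℝ) ^ i) • (fun d : Fin (k + 1) => t i ^ (d : ℕ))) ≠ 0 := by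
  classical
  intro hzero
  have hb : ∀ i ∈ S, i < m := fun i hi => Finset.mem_range.mp (hSsub hi)
  have hm2 : 2 ≤ m := by omega
  -- no two consecutive elements (linear version)
  have hcons : ∀ c, c ∈ S → c + 1 < m → c + 1 ∉ S := by
    intro c hc h1
    have := hstable c hc
    rwa [Nat.mod_eq_of_lt h1] at this
  have hwrap : ¬(0 ∈ S ∧ m - 1 ∈ S) := by
    rintro ⟨h0, hm1⟩
    have := hstable (m - 1) hm1
    have hm' : (m - 1 + 1) % m = 0 := by
      have h : m - 1 + 1 = m := by omega
      rw [h, Nat.mod_self]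
    rw [hm'] at this; exact this h0
  -- the moment sums vanish in each coordinate
  have hsum : ∀ d : ℕ, d < k + 1 → ∑ i ∈ S, ((-1 : ℝ) ^ i) * t i ^ d = 0 := by
    intro d hd
    have := congrFun hzero ⟨d, hd⟩
    simpa [Finset.sum_apply] using this
  -- the root index set
  set R : Finset ℕ := (Finset.Ico 1 m).filter (fun c => c ∉ S ∧ c - 1 ∉ S) with hRdef
  have hmemR : ∀ c, c ∈ R ↔ 1 ≤ c ∧ c < m ∧ c ∉ S ∧ c - 1 ∉ S := by
    intro c
    simp only [hRdef, Finset.mem_filter, Finset.mem_Ico]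
    tauto
  -- cardinality of R is at most k
  have hcardR : R.card ≤ k := by
    have hsplit := Finset.card_filter_add_card_filter_not
      (s := Finset.Ico 1 m) (p := fun c => c ∈ S ∨ c - 1 ∈ S)
    have hneg : (Finset.Ico 1 m).filter (fun c => ¬(c ∈ S ∨ c - 1 ∈ S)) = R := by
      rw [hRdef]; apply Finset.filter_congr; intro c _; push_neg; tauto
    set A : Finset ℕ := (Finset.Ico 1 m).filter (fun c => c ∈ S) with hA
    set B : Finset ℕ := (Finset.Ico 1 m).filter (fun c => c - 1 ∈ S) with hB
    have hor : (Finset.Ico 1 m).filter (fun c => c ∈ S ∨ c - 1 ∈ S) = A ∪ B :=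
      Finset.filter_or _ _ _
    have hdisj : Disjoint A B := by
      rw [Finset.disjoint_left]
      intro c hcA hcB
      rw [hA, Finset.mem_filter, Finset.mem_Ico] at hcA
      rw [hB, Finset.mem_filter] at hcB
      have h1 : c - 1 + 1 = c := by omega
      have := hcons (c - 1) hcB.2 (by omega)
      rw [h1] at this
      exact this hcA.2
    have hAeq : A = S.erase 0 := by
      ext c
      rw [hA, Finset.mem_filter, Finset.mem_Ico, Finset.mem_erase]
      constructor
      · rintro ⟨⟨h1, _⟩, h2⟩; exact ⟨by omega, h2⟩
      · rintro ⟨h1, h2⟩; exact ⟨⟨by omega, hb c h2⟩, h2⟩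
    have hBeq : B = (S.erase (m - 1)).image (· + 1) := by
      ext c
      rw [hB, Finset.mem_filter, Finset.mem_Ico, Finset.mem_image]
      constructor
      · rintro ⟨⟨h1, h2⟩, h3⟩
        exact ⟨c - 1, Finset.mem_erase.mpr ⟨by omega, h3⟩, by omega⟩
      · rintro ⟨j, hj, rfl⟩
        rw [Finset.mem_erase] at hj
        have := hb j hj.2
        exact ⟨⟨by omega, by omega⟩, by simpa using hj.2⟩
    have hcardB : B.card = (S.erase (m - 1)).card := by
      rw [hBeq]; exact Finset.card_image_of_injective _ (add_left_injective 1)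
    have hABcard : A.card + B.card ≥ 2 * n - 1 := by
      by_cases h0 : 0 ∈ S
      · have hm1 : m - 1 ∉ S := fun h => hwrap ⟨h0, h⟩
        have : A.card = n - 1 := by rw [hAeq, Finset.card_erase_of_mem h0, hScard]
        have hB' : B.card = n := by
          rw [hcardB, Finset.erase_eq_of_notMem hm1, hScard]
        omega
      · have hA' : A.card = n := by rw [hAeq, Finset.erase_eq_of_notMem h0, hScard]
        have hB' : B.card ≥ n - 1 := by
          by_cases hm1 : m - 1 ∈ S
          · rw [hcardB, Finset.card_erase_of_mem hm1, hScard]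
          · rw [hcardB, Finset.erase_eq_of_notMem hm1, hScard]; omega
        omega
    have hIco : (Finset.Ico 1 m).card = m - 1 := by rw [Nat.card_Ico]
    have hAB : (A ∪ B).card = A.card + B.card := Finset.card_union_of_disjoint hdisj
    rw [hneg, hor, hAB, hIco] at hsplit
    omega
  clear hRdef
  clear_value R
  -- the polynomial
  set p : Polynomial ℝ := ∏ c ∈ R, (Polynomial.X - Polynomial.C (t c)) with hp
  have hpmonic : p.Monic := Polynomial.monic_prod_of_monic _ _
    (fun c _ => Polynomial.monic_X_sub_C (t c))
  have hpdeg : p.natDegree ≤ k := by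
    have : p.natDegree = R.card := by
      rw [hp, Polynomial.natDegree_prod _ _ (fun c _ => Polynomial.X_sub_C_ne_zero (t c))]
      simp [Polynomial.natDegree_X_sub_C]
    omega
  have hpeval : ∀ x : ℝ, p.eval x = ∏ c ∈ R, (x - t c) := by
    intro x; rw [hp]; simp [Polynomial.eval_prod]
  -- the alternating sum against p vanishes
  have hE0 : ∑ i ∈ S, ((-1 : ℝ) ^ i) * p.eval (t i) = 0 := by
    have key : ∀ i : ℕ, p.eval (t i) =
        ∑ d ∈ Finset.range (k + 1), p.coeff d * t i ^ d := fun i =>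
      Polynomial.eval_eq_sum_range' (Nat.lt_succ_of_le hpdeg) (t i)
    calc ∑ i ∈ S, ((-1 : ℝ) ^ i) * p.eval (t i)
        = ∑ i ∈ S, ∑ d ∈ Finset.range (k + 1), p.coeff d * (((-1 : ℝ) ^ i) * t i ^ d) := by
          refine Finset.sum_congr rfl fun i _ => ?_
          rw [key, Finset.mul_sum]
          exact Finset.sum_congr rfl fun d _ => by ring
      _ = ∑ d ∈ Finset.range (k + 1), ∑ i ∈ S, p.coeff d * (((-1 : ℝ) ^ i) * t i ^ d) :=
          Finset.sum_comm
      _ = 0 := by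
          refine Finset.sum_eq_zero fun d hd => ?_
          rw [← Finset.mul_sum, hsum d (Finset.mem_range.mp hd), mul_zero]
  -- sign analysis
  have hQpos : ∀ i ∈ S, 0 < ∏ c ∈ R, |t i - t c| := by
    intro i hi
    refine Finset.prod_pos fun c hc => ?_
    obtain ⟨h1, h2, h3, _⟩ := (hmemR c).1 hc
    rcases lt_trichotomy i c with h | h | h
    · have := ht i c h h2; rw [abs_pos]; linarith
    · exact absurd (h ▸ hi) h3
    · have := ht c i h (hb i hi); rw [abs_pos]; linarith
  have hsplitSign : ∀ i ∈ S, ∏ c ∈ R, (t i - t c) =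
      ((-1 : ℝ) ^ ((R.filter (fun c => i < c)).card)) * ∏ c ∈ R, |t i - t c| := by
    intro i hi
    have hfac : ∀ c ∈ R, t i - t c = (if i < c then (-1 : ℝ) else 1) * |t i - t c| := by
      intro c hc
      obtain ⟨h1, h2, h3, _⟩ := (hmemR c).1 hc
      rcases lt_trichotomy i c with h | h | h
      · have := ht i c h h2
        rw [if_pos h, abs_of_neg (by linarith : t i - t c < 0)]; ring
      · exact absurd (h ▸ hi) h3
      · have := ht c i h (hb i hi)
        rw [if_neg (by omega), abs_of_pos (by linarith : 0 < t i - t c)]; ring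
    rw [Finset.prod_congr rfl hfac, Finset.prod_mul_distrib]
    congr 1
    rw [Finset.prod_ite, Finset.prod_const, Finset.prod_const, one_pow, mul_one]
  -- parity of i + #{c ∈ R : c > i} is constant on S
  have hpar : ∀ i ∈ S, ∀ j ∈ S, i ≤ j →
      (i + (R.filter (fun c => i < c)).card) % 2
        = (j + (R.filter (fun c => j < c)).card) % 2 := by
    intro i hi j hj hij
    rcases eq_or_lt_of_le hij with rfl | hij
    · rfl
    have him := hb i hi
    have hjm := hb j hj
    -- split the filter
    have hsplitF : R.filter (fun c => i < c) =
        (R.filter (fun c => i < c ∧ c ≤ j)) ∪ (R.filter (fun c => j < c)) := by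
      rw [← Finset.filter_or]
      apply Finset.filter_congr
      intro c _; constructor
      · intro h; omega
      · intro h; omega
    have hdisjF : Disjoint (R.filter (fun c => i < c ∧ c ≤ j)) (R.filter (fun c => j < c)) := by
      rw [Finset.disjoint_left]
      intro c h1 h2
      rw [Finset.mem_filter] at h1 h2
      omega
    have hri : (R.filter (fun c => i < c)).card =
        (R.filter (fun c => i < c ∧ c ≤ j)).card + (R.filter (fun c => j < c)).card := by
      rw [hsplitF, Finset.card_union_of_disjoint hdisjF]
    -- now analyze the middle part
    set T : Finset ℕ := Finset.Ioc i j with hT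
    have hTcard : T.card = j - i := Nat.card_Ioc i j
    have hGeq : T.filter (fun c => c ∈ R) = R.filter (fun c => i < c ∧ c ≤ j) := by
      ext c
      rw [hT, Finset.mem_filter, Finset.mem_filter, Finset.mem_Ioc]
      tauto
    set X : Finset ℕ := T.filter (fun c => c ∈ S) with hX
    set Y : Finset ℕ := T.filter (fun c => c - 1 ∈ S) with hY
    have hTsplit := Finset.card_filter_add_card_filter_not
      (s := T) (p := fun c => c ∈ R)
    have hnotR : T.filter (fun c => ¬ c ∈ R) = X ∪ Y := by
      rw [hX, hY, ← Finset.filter_or]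
      apply Finset.filter_congr
      intro c hc
      rw [hT, Finset.mem_Ioc] at hc
      rw [hmemR c]
      constructor
      · intro h
        by_contra hcon
        push_neg at hcon
        exact h ⟨by omega, by omega, hcon.1, hcon.2⟩
      · rintro (h | h) ⟨_, _, h3, h4⟩
        exacts [h3 h, h4 h]
    have hdisjXY : Disjoint X Y := by
      rw [Finset.disjoint_left]
      intro c hcX hcY
      rw [hX, Finset.mem_filter, hT, Finset.mem_Ioc] at hcX
      rw [hY, Finset.mem_filter] at hcY
      have h1 : c - 1 + 1 = c := by omega
      have := hcons (c - 1) hcY.2 (by omega)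
      rw [h1] at this
      exact this hcX.2
    have hXYcard : X.card = Y.card := by
      apply Finset.card_bij' (fun x _ => if x = j then i + 1 else x + 1)
        (fun y _ => if y = i + 1 then j else y - 1)
      · intro a ha
        rw [hX, Finset.mem_filter, hT, Finset.mem_Ioc] at ha
        by_cases haj : a = j
        · rw [if_pos haj, hY, Finset.mem_filter, hT, Finset.mem_Ioc]
          refine ⟨⟨by omega, by omega⟩, by simpa using hi⟩
        · rw [if_neg haj, hY, Finset.mem_filter, hT, Finset.mem_Ioc]
          refine ⟨⟨by omega, by omega⟩, by simpa using ha.2⟩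
      · intro y hy
        rw [hY, Finset.mem_filter, hT, Finset.mem_Ioc] at hy
        by_cases hyi : y = i + 1
        · rw [if_pos hyi, hX, Finset.mem_filter, hT, Finset.mem_Ioc]
          exact ⟨⟨hij, le_refl j⟩, hj⟩
        · rw [if_neg hyi, hX, Finset.mem_filter, hT, Finset.mem_Ioc]
          refine ⟨⟨by omega, by omega⟩, by simpa using hy.2⟩
      · intro a ha
        rw [hX, Finset.mem_filter, hT, Finset.mem_Ioc] at ha
        by_cases haj : a = j
        · rw [if_pos haj, if_pos rfl, haj]
        · rw [if_neg haj, if_neg (by omega)]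
          omega
      · intro y hy
        rw [hY, Finset.mem_filter, hT, Finset.mem_Ioc] at hy
        by_cases hyi : y = i + 1
        · rw [if_pos hyi, if_pos rfl, hyi]
        · rw [if_neg hyi, if_neg (by omega)]
          omega
    have hXY : (X ∪ Y).card = X.card + Y.card := Finset.card_union_of_disjoint hdisjXY
    rw [hnotR, hGeq, hXY, hTcard] at hTsplit
    omega
  -- conclude
  have hSne : S.Nonempty := Finset.card_pos.mp (by omega)
  obtain ⟨i₀, hi₀⟩ := hSne
  set σ : ℝ := (-1 : ℝ) ^ (i₀ + (R.filter (fun c => i₀ < c)).card) with hσ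
  have hterm : ∀ i ∈ S, ((-1 : ℝ) ^ i) * p.eval (t i) = σ * ∏ c ∈ R, |t i - t c| := by
    intro i hi
    rw [hpeval, hsplitSign i hi, ← mul_assoc, ← pow_add]
    congr 1
    rw [hσ]
    rcases le_total i i₀ with h | h
    · exact negOnePow_congr (hpar i hi i₀ hi₀ h)
    · exact (negOnePow_congr (hpar i₀ hi₀ i hi h)).symm
  have hEpos : ∑ i ∈ S, ((-1 : ℝ) ^ i) * p.eval (t i) = σ * ∑ i ∈ S, ∏ c ∈ R, |t i - t c| := by
    rw [Finset.mul_sum]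
    exact Finset.sum_congr rfl hterm
  have hσne : σ ≠ 0 := by
    rw [hσ]; exact pow_ne_zero _ (by norm_num)
  have hsumpos : 0 < ∑ i ∈ S, ∏ c ∈ R, |t i - t c| :=
    Finset.sum_pos hQpos ⟨i₀, hi₀⟩
  rw [hEpos] at hE0
  rcases mul_eq_zero.mp hE0 with h | h
  · exact hσne h
  · linarith
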